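/- Let n ≥ 4 be even, ℓ an integer with 0 ≤ ℓ ≤ (n−2)/2, and π' = π \ {α_{n−1−2k} : 0 ≤ k ≤ ℓ} \ {α_n} in type D_n. In ℝ^n let S⁺ = {β_i = ε_{2i-1}+ε_{2i} : 1 ≤ i ≤ (n−2)/2} and S⁻ = {−β'_i = ε_{n−2ℓ−i} − ε_i : 1 ≤ i ≤ (n−2−2ℓ)/2}. Then the restrictions of S = S⁺ ∪ S⁻ to h' = span{α^∨ : α ∈ π'} form a basis of (h')^*; in particular |S| = n − 2 − ℓ = dim h'. -/

import Mathlib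

open scoped RealInnerProductSpace

/-- 1-based orthonormal basis vectors `ε_k` of `ℝ^n` (zero out of range). -/
noncomputable def eps (n k : ℕ) : EuclideanSpace ℝ (Fin n) :=
  if h : 1 ≤ k ∧ k ≤ n then EuclideanSpace.single ⟨k - 1, by omega⟩ (1 : ℝ) else 0

/-- The restriction to the subspace `W` of the linear functional `⟪x, ·⟫`
(i.e. the restriction to `W` of a weight `x`, under the identification of
weights with vectors given by the form). -/
noncomputable def restrictedInner {n : ℕ} (x : EuclideanSpace ℝ (Fin n))
    (W : Submodule ℝ (EuclideanSpace ℝ (Fin n))) : Module.Dual ℝ W where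
  toFun w := ⟪x, (w : EuclideanSpace ℝ (Fin n))⟫
  map_add' a b := by simp [inner_add_right]
  map_smul' c a := by simp [inner_smul_right]

/-- The coroots of type `D_n` : `α_k^∨ = ε_k - ε_{k+1}` for `k < n` and
`α_n^∨ = ε_{n-1} + ε_n`. -/
noncomputable def corootD (n k : ℕ) : EuclideanSpace ℝ (Fin n) :=
  if k = n then eps n (n - 1) + eps n n else eps n k - eps n (k + 1)

lemma inner_eps_eps (n k j : ℕ) :
    ⟪eps n k, eps n j⟫ = if (k = j ∧ 1 ≤ k ∧ k ≤ n) then (1:ℝ) else 0 := by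
  unfold eps
  by_cases hk : 1 ≤ k ∧ k ≤ n <;> by_cases hj : 1 ≤ j ∧ j ≤ n <;>
    simp [hk, hj, EuclideanSpace.inner_single_left, EuclideanSpace.single_apply]
  · rcases eq_or_ne k j with h | h
    · simp [h, Fin.ext_iff]
    · have hne : j - 1 ≠ k - 1 := by omega
      simp [Fin.ext_iff, hne, h]
      omega
  · rintro rfl; exact hj hk

lemma restrictedInner_apply {n : ℕ} (x : EuclideanSpace ℝ (Fin n))
    (W : Submodule ℝ (EuclideanSpace ℝ (Fin n))) (w : W) :
    restrictedInner x W w = ⟪x, (w : EuclideanSpace ℝ (Fin n))⟫ := rfl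

lemma sum_if_index {m : ℕ} (f : Fin m → ℝ) (j : ℕ) :
    (∑ i : Fin m, if j = i.1 + 1 then f i else 0) =
    if h : 1 ≤ j ∧ j ≤ m then f ⟨j - 1, by omega⟩ else 0 := by
  split_ifs with h
  · rw [Finset.sum_eq_single (⟨j - 1, by omega⟩ : Fin m)]
    · rw [if_pos (show j = j - 1 + 1 by omega)]
    · intro i _ hi
      rw [if_neg]
      intro he
      exact hi (by ext; simp; omega)
    · intro h'; exact absurd (Finset.mem_univ _) h'
  · apply Finset.sum_eq_zero
    intro i _
    rw [if_neg]
    intro he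
    exact h ⟨by omega, by omega⟩

lemma inner_eps_U (n k j : ℕ) (hj : 1 ≤ j) (hjn : j ≤ n) :
    ⟪eps n j, ∑ p ∈ Finset.Icc 1 k, eps n p⟫ = if j ≤ k then 1 else 0 := by
  rw [inner_sum]
  have : ∀ p ∈ Finset.Icc 1 k, ⟪eps n j, eps n p⟫ = if j = p then (1:ℝ) else 0 := by
    intro p _
    rw [inner_eps_eps]
    split_ifs with h1 h2 h2 <;> first | rfl | omega
  rw [Finset.sum_congr rfl this, Finset.sum_ite_eq]
  simp [Finset.mem_Icc, hj]

/-- The coefficient chase for statement 15. -/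
lemma chase (q l : ℕ) (A B coord : ℕ → ℝ)
    (hA0 : ∀ i, q + l + 1 ≤ i → A i = 0)
    (hB0 : ∀ j, j = 0 ∨ q + 1 ≤ j → B j = 0)
    (hdef : ∀ p, coord p = A ((p + 1) / 2) + B (2 * q + 2 - p) - B p)
    (h1 : ∀ k, 1 ≤ k → k ≤ 2 * q → coord k = coord (k + 1))
    (h2 : ∀ t, 1 ≤ t → t ≤ l → coord (2 * q + 2 * t) = coord (2 * q + 2 * t + 1)) :
    ∀ i, 1 ≤ i → A i = 0 ∧ B i = 0 := by
  have hstep : ∀ t, 1 ≤ t → t ≤ l → A (q + t) = A (q + t + 1) := by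
    intro t ht1 ht2
    have e1 := hdef (2 * q + 2 * t)
    have e2 := hdef (2 * q + 2 * t + 1)
    have d1 : (2 * q + 2 * t + 1) / 2 = q + t := by omega
    have d2 : 2 * q + 2 - (2 * q + 2 * t) = 0 := by omega
    have d3 : (2 * q + 2 * t + 1 + 1) / 2 = q + t + 1 := by omega
    have d4 : 2 * q + 2 - (2 * q + 2 * t + 1) = 0 := by omega
    rw [d1, d2] at e1
    rw [d3, d4] at e2
    have b1 : B 0 = 0 := hB0 0 (Or.inl rfl)
    have b2 : B (2 * q + 2 * t) = 0 := hB0 _ (Or.inr (by omega))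
    have b3 : B (2 * q + 2 * t + 1) = 0 := hB0 _ (Or.inr (by omega))
    have := h2 t ht1 ht2
    rw [e1, e2] at this
    linarith
  have key : ∀ d, d ≤ l → A (q + l + 1 - d) = 0 := by
    intro d
    induction d with
    | zero => intro _; exact hA0 _ (by omega)
    | succ d ih =>
      intro hd
      have e1 : q + l + 1 - (d + 1) = q + (l - d) := by omega
      have e2 : q + (l - d) + 1 = q + l + 1 - d := by omega
      rw [e1, hstep (l - d) (by omega) (by omega), e2]
      exact ih (by omega)
  have hAq1 : A (q + 1) = 0 := by
    have := key l le_rfl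
    rwa [show q + l + 1 - l = q + 1 by omega] at this
  have hC : ∀ p, 1 ≤ p → p ≤ 2 * q + 1 → coord p = coord 1 := by
    intro p
    induction p with
    | zero => omega
    | succ p ih =>
      intro hp1 hp2
      rcases Nat.eq_or_lt_of_le hp1 with h | h
      · rw [← h]
      · rw [← h1 p (by omega) (by omega)]
        exact ih (by omega) (by omega)
  have R2 : ∀ i, 1 ≤ i → i ≤ q + 1 → A i + A (q + 2 - i) = 2 * coord 1 := by
    intro i hi1 hi2
    have e1 := hdef (2 * i - 1)
    have e2 := hdef (2 * q + 3 - 2 * i)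
    rw [show (2 * i - 1 + 1) / 2 = i by omega,
        show 2 * q + 2 - (2 * i - 1) = 2 * q + 3 - 2 * i by omega] at e1
    rw [show (2 * q + 3 - 2 * i + 1) / 2 = q + 2 - i by omega,
        show 2 * q + 2 - (2 * q + 3 - 2 * i) = 2 * i - 1 by omega] at e2
    have c1 := hC (2 * i - 1) (by omega) (by omega)
    have c2 := hC (2 * q + 3 - 2 * i) (by omega) (by omega)
    rw [e1] at c1
    rw [e2] at c2
    linarith
  have R1 : ∀ i, 1 ≤ i → i ≤ q → A i + A (q + 1 - i) = 2 * coord 1 := by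
    intro i hi1 hi2
    have e1 := hdef (2 * i)
    have e2 := hdef (2 * q + 2 - 2 * i)
    rw [show (2 * i + 1) / 2 = i by omega] at e1
    rw [show (2 * q + 2 - 2 * i + 1) / 2 = q + 1 - i by omega,
        show 2 * q + 2 - (2 * q + 2 - 2 * i) = 2 * i by omega] at e2
    have c1 := hC (2 * i) (by omega) (by omega)
    have c2 := hC (2 * q + 2 - 2 * i) (by omega) (by omega)
    rw [e1] at c1
    rw [e2] at c2
    linarith
  have hAeq : ∀ j, 1 ≤ j → j ≤ q → A (j + 1) = A j := by
    intro j hj1 hj2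
    have r2 := R2 (q + 1 - j) (by omega) (by omega)
    rw [show q + 2 - (q + 1 - j) = j + 1 by omega] at r2
    have r1 := R1 j hj1 hj2
    linarith
  have hA1q : ∀ j, 1 ≤ j → j ≤ q + 1 → A j = 0 := by
    have down : ∀ d, d ≤ q → A (q + 1 - d) = 0 := by
      intro d
      induction d with
      | zero => intro _; exact hAq1
      | succ d ih =>
        intro hd
        have := hAeq (q - d) (by omega) (by omega)
        rw [show q - d + 1 = q + 1 - d by omega] at this
        rw [show q + 1 - (d + 1) = q - d by omega, ← this]
        exact ih (by omega)
    intro j hj1 hj2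
    have := down (q + 1 - j) (by omega)
    rwa [show q + 1 - (q + 1 - j) = j by omega] at this
  have hc0 : coord 1 = 0 := by
    have r2 := R2 1 le_rfl (by omega)
    rw [show q + 2 - 1 = q + 1 by omega] at r2
    have a1 := hA1q 1 le_rfl (by omega)
    linarith [hAq1]
  intro i hi1
  constructor
  · rcases le_or_gt i (q + 1) with h | h
    · exact hA1q i hi1 h
    · rcases le_or_gt i (q + l + 1) with h' | h'
      · have := key (q + l + 1 - i) (by omega)
        rwa [show q + l + 1 - (q + l + 1 - i) = i by omega] at this
      · exact hA0 i (by omega)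
  · rcases le_or_gt i q with h | h
    · have e := hdef i
      have c := hC i hi1 (by omega)
      rw [hc0] at c
      have a0 : A ((i + 1) / 2) = 0 := hA1q _ (by omega) (by omega)
      have b0 : B (2 * q + 2 - i) = 0 := hB0 _ (Or.inr (by omega))
      rw [e, a0, b0] at c
      linarith
    · exact hB0 i (Or.inr h)

set_option maxHeartbeats 2000000 in
/-- Type `D_n`, `n ≥ 4` even, `0 ≤ ℓ ≤ (n-2)/2`,
`π' = π \ ({α_{n-1-2k} : 0 ≤ k ≤ ℓ} ∪ {α_n})`. With
`S⁺ = {β_i = ε_{2i-1} + ε_{2i} : 1 ≤ i ≤ (n-2)/2}` and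
`S⁻ = {-β'_i = ε_{n-2ℓ-i} - ε_i : 1 ≤ i ≤ (n-2-2ℓ)/2}`, the restrictions of
`S = S⁺ ∪ S⁻` to `h' = span{α^∨ : α ∈ π'}` form a basis of `(h')^*`; in
particular `|S| = n - 2 - ℓ = dim h'`. -/
theorem statement_15 (n ℓ : ℕ) (hn : 4 ≤ n) (hneven : Even n) (hl : 2 * ℓ ≤ n - 2)
    (S : Set (EuclideanSpace ℝ (Fin n)))
    (hS : S = {v | ∃ i, 1 ≤ i ∧ i ≤ (n - 2) / 2 ∧ v = eps n (2 * i - 1) + eps n (2 * i)}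
        ∪ {v | ∃ i, 1 ≤ i ∧ i ≤ (n - 2 - 2 * ℓ) / 2 ∧ v = eps n (n - 2 * ℓ - i) - eps n i})
    (h' : Submodule ℝ (EuclideanSpace ℝ (Fin n)))
    (hh' : h' = Submodule.span ℝ
        {v | ∃ k, 1 ≤ k ∧ k ≤ n ∧ ¬ (k = n ∨ ∃ t, t ≤ ℓ ∧ k = n - 1 - 2 * t) ∧
          v = corootD n k}) :
    S.ncard = n - 2 - ℓ ∧ Module.finrank ℝ h' = n - 2 - ℓ ∧
    LinearIndependent ℝ (fun x : S => restrictedInner (x : EuclideanSpace ℝ (Fin n)) h') ∧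
    Submodule.span ℝ
      (Set.range (fun x : S => restrictedInner (x : EuclideanSpace ℝ (Fin n)) h')) = ⊤ := by
  obtain ⟨m, hm⟩ := hneven
  obtain ⟨q, hq⟩ : ∃ q, n = 2 * q + 2 * ℓ + 2 := ⟨(n - 2 - 2 * ℓ) / 2, by omega⟩
  -- the indexed family for S
  set g : (Fin (q + ℓ) ⊕ Fin q) → EuclideanSpace ℝ (Fin n) :=
    Sum.elim (fun i => eps n (2 * (i.1 + 1) - 1) + eps n (2 * (i.1 + 1)))
      (fun j => eps n (2 * q + 2 - (j.1 + 1)) - eps n (j.1 + 1)) with hgdef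
  have hrange : Set.range g = S := by
    rw [hS]
    ext v
    constructor
    · rintro ⟨(i | j), rfl⟩
      · left
        exact ⟨i.1 + 1, by omega, by have := i.2; omega, rfl⟩
      · right
        refine ⟨j.1 + 1, by omega, by have := j.2; omega, ?_⟩
        show _ = eps n (n - 2 * ℓ - (j.1 + 1)) - eps n (j.1 + 1)
        rw [show n - 2 * ℓ - (j.1 + 1) = 2 * q + 2 - (j.1 + 1) from by omega]
        rfl
    · rintro (⟨i, hi1, hi2, rfl⟩ | ⟨i, hi1, hi2, rfl⟩)
      · refine ⟨Sum.inl ⟨i - 1, by omega⟩, ?_⟩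
        show eps n (2 * (i - 1 + 1) - 1) + eps n (2 * (i - 1 + 1)) = _
        rw [show i - 1 + 1 = i from by omega]
      · refine ⟨Sum.inr ⟨i - 1, by omega⟩, ?_⟩
        show eps n (2 * q + 2 - (i - 1 + 1)) - eps n (i - 1 + 1) = _
        rw [show i - 1 + 1 = i from by omega,
            show 2 * q + 2 - i = n - 2 * ℓ - i from by omega]
  have hginj : Function.Injective g := by
    rintro (i | j) (i' | j') h
    · have hi := i.2; have hi' := i'.2
      have h2 := congrArg (fun v : EuclideanSpace ℝ (Fin n) => ⟪v, eps n (2 * (i.1 + 1))⟫) h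
      simp only [hgdef, Sum.elim_inl, inner_add_left, inner_eps_eps, true_and] at h2
      congr 1
      ext
      by_contra hne
      split_ifs at h2 <;> first | omega | norm_num at h2
    · exfalso
      have hi := i.2; have hj := j'.2
      have h2 := congrArg (fun v : EuclideanSpace ℝ (Fin n) => ⟪v, eps n (j'.1 + 1)⟫) h
      simp only [hgdef, Sum.elim_inl, Sum.elim_inr, inner_add_left, inner_sub_left,
        inner_eps_eps, true_and] at h2
      split_ifs at h2 <;> first | omega | norm_num at h2
    · exfalso
      have hi := i'.2; have hj := j.2
      have h2 := congrArg (fun v : EuclideanSpace ℝ (Fin n) => ⟪v, eps n (j.1 + 1)⟫) h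
      simp only [hgdef, Sum.elim_inl, Sum.elim_inr, inner_add_left, inner_sub_left,
        inner_eps_eps, true_and] at h2
      split_ifs at h2 <;> first | omega | norm_num at h2
    · have hj := j.2; have hj' := j'.2
      have h2 := congrArg (fun v : EuclideanSpace ℝ (Fin n) => ⟪v, eps n (j.1 + 1)⟫) h
      simp only [hgdef, Sum.elim_inr, inner_sub_left, inner_eps_eps, true_and] at h2
      congr 1
      ext
      by_contra hne
      split_ifs at h2 <;> first | omega | norm_num at h2
  -- the coroot index family
  set κ : Fin (2 * q + ℓ) → ℕ :=
    fun i => if i.1 < 2 * q then i.1 + 1 else 2 * i.1 - 2 * q + 2 with hκdef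
  set g' : Fin (2 * q + ℓ) → EuclideanSpace ℝ (Fin n) := fun i => corootD n (κ i) with hg'def
  have hκrange : ∀ i : Fin (2 * q + ℓ), 1 ≤ κ i ∧ κ i ≤ n - 1 := by
    intro i
    have := i.2
    simp only [hκdef]
    split_ifs <;> omega
  have hκinj : Function.Injective κ := by
    intro i j h
    have hi := i.2; have hj := j.2
    simp only [hκdef] at h
    ext
    split_ifs at h <;> omega
  have hcor : ∀ i : Fin (2 * q + ℓ), g' i = eps n (κ i) - eps n (κ i + 1) := by
    intro i
    have := (hκrange i).2
    simp only [hg'def, corootD]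
    rw [if_neg (by omega)]
  have hgen : {v : EuclideanSpace ℝ (Fin n) |
      ∃ k, 1 ≤ k ∧ k ≤ n ∧ ¬ (k = n ∨ ∃ t, t ≤ ℓ ∧ k = n - 1 - 2 * t) ∧ v = corootD n k}
      = Set.range g' := by
    ext v
    constructor
    · rintro ⟨k, hk1, hk2, hk3, rfl⟩
      push_neg at hk3
      obtain ⟨hkn, hkt⟩ := hk3
      rcases le_or_gt k (2 * q) with hk | hk
      · refine ⟨⟨k - 1, by omega⟩, ?_⟩
        show corootD n (if k - 1 < 2 * q then k - 1 + 1 else 2 * (k - 1) - 2 * q + 2) = _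
        rw [if_pos (by omega), show k - 1 + 1 = k from by omega]
      · obtain ⟨t, ht1, ht2, rfl⟩ : ∃ t, 1 ≤ t ∧ t ≤ ℓ ∧ k = 2 * q + 2 * t := by
          by_contra hno
          push_neg at hno
          have h1 := hno ((k - 2 * q) / 2)
          have h2 := hkt ((n - 1 - k) / 2)
          omega
        refine ⟨⟨2 * q + t - 1, by omega⟩, ?_⟩
        show corootD n (if 2 * q + t - 1 < 2 * q then 2 * q + t - 1 + 1
          else 2 * (2 * q + t - 1) - 2 * q + 2) = _
        rw [if_neg (by omega), show 2 * (2 * q + t - 1) - 2 * q + 2 = 2 * q + 2 * t from by omega]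
    · rintro ⟨i, rfl⟩
      have hi := i.2
      refine ⟨κ i, (hκrange i).1, by have := (hκrange i).2; omega, ?_, rfl⟩
      rintro (h | ⟨t, ht, he⟩)
      · have := (hκrange i).2; omega
      · simp only [hκdef] at he
        split_ifs at he <;> omega
  have hg'li : LinearIndependent ℝ g' := by
    rw [Fintype.linearIndependent_iff]
    intro c hc i0
    have happ := congrArg
      (fun v : EuclideanSpace ℝ (Fin n) => ⟪v, ∑ p ∈ Finset.Icc 1 (κ i0), eps n p⟫) hc
    simp only [sum_inner, real_inner_smul_left, inner_zero_left] at happ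
    have hterm : ∀ i : Fin (2 * q + ℓ),
        ⟪g' i, ∑ p ∈ Finset.Icc 1 (κ i0), eps n p⟫ = if i = i0 then (1:ℝ) else 0 := by
      intro i
      have hr := hκrange i
      have hr0 := hκrange i0
      rw [hcor i, inner_sub_left,
        inner_eps_U n (κ i0) (κ i) hr.1 (by omega),
        inner_eps_U n (κ i0) (κ i + 1) (by omega) (by omega)]
      rcases eq_or_ne i i0 with rfl | hne
      · rw [if_pos le_rfl, if_neg (by omega), if_pos rfl]
        norm_num
      · have hκne : κ i ≠ κ i0 := fun he => hne (hκinj he)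
        rw [if_neg hne]
        split_ifs with hA hB hB <;> first | omega | norm_num
    calc c i0 = ∑ i, c i * ⟪g' i, ∑ p ∈ Finset.Icc 1 (κ i0), eps n p⟫ := by
          rw [Finset.sum_congr rfl (fun i _ => by rw [hterm i])]
          simp [Finset.sum_ite_eq']
      _ = 0 := happ
  have hfd : FiniteDimensional ℝ ↥h' := inferInstance
  have hfr : Module.finrank ℝ ↥h' = 2 * q + ℓ := by
    rw [hh', hgen, finrank_span_eq_card hg'li, Fintype.card_fin]
  have key : ∀ G : (Fin (q + ℓ) ⊕ Fin q) → ℝ,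
      (∑ i, G i • restrictedInner (g i) h') = 0 → ∀ i, G i = 0 := by
    intro G hG
    set A : ℕ → ℝ :=
      fun i => if h : 1 ≤ i ∧ i ≤ q + ℓ then G (Sum.inl ⟨i - 1, by omega⟩) else 0 with hA
    set B : ℕ → ℝ :=
      fun j => if h : 1 ≤ j ∧ j ≤ q then G (Sum.inr ⟨j - 1, by omega⟩) else 0 with hB
    set v : EuclideanSpace ℝ (Fin n) := ∑ i, G i • g i with hv
    set coord : ℕ → ℝ := fun p => ⟪v, eps n p⟫ with hcoorddef
    have hvw : ∀ w, w ∈ h' → ⟪v, w⟫ = 0 := by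
      intro w hw
      have happ := congrArg (fun F : Module.Dual ℝ ↥h' => F ⟨w, hw⟩) hG
      simp only [LinearMap.sum_apply, LinearMap.smul_apply, LinearMap.zero_apply,
        smul_eq_mul, restrictedInner_apply] at happ
      rw [hv, sum_inner]
      rw [Finset.sum_congr rfl (fun i _ => real_inner_smul_left (g i) w (G i))]
      exact happ
    have hcoord : ∀ p : ℕ, ⟪v, eps n p⟫ = A ((p + 1) / 2) + B (2 * q + 2 - p) - B p := by
      intro p
      rw [hv, sum_inner, Fintype.sum_sum_type]
      have t1 : ∀ i : Fin (q + ℓ), ⟪G (Sum.inl i) • g (Sum.inl i), eps n p⟫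
          = if (p + 1) / 2 = i.1 + 1 then G (Sum.inl i) else 0 := by
        intro i
        have hi := i.2
        rw [real_inner_smul_left]
        show G (Sum.inl i) * ⟪eps n (2 * (i.1 + 1) - 1) + eps n (2 * (i.1 + 1)), eps n p⟫ = _
        rw [inner_add_left, inner_eps_eps, inner_eps_eps]
        split_ifs <;> first | (exfalso; omega) | ring
      have t2 : ∀ j : Fin q, ⟪G (Sum.inr j) • g (Sum.inr j), eps n p⟫
          = (if 2 * q + 2 - p = j.1 + 1 then G (Sum.inr j) else 0)
            - (if p = j.1 + 1 then G (Sum.inr j) else 0) := by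
        intro j
        have hj := j.2
        rw [real_inner_smul_left]
        show G (Sum.inr j) * ⟪eps n (2 * q + 2 - (j.1 + 1)) - eps n (j.1 + 1), eps n p⟫ = _
        rw [inner_sub_left, inner_eps_eps, inner_eps_eps]
        split_ifs <;> first | (exfalso; omega) | ring
      rw [Finset.sum_congr rfl (fun i _ => t1 i), Finset.sum_congr rfl (fun j _ => t2 j),
        Finset.sum_sub_distrib, sum_if_index, sum_if_index, sum_if_index]
      simp only [hA, hB]
      rw [add_sub_assoc]
    have hmemK : ∀ k, 1 ≤ k → k ≤ n - 1 → (∀ t, t ≤ ℓ → k ≠ n - 1 - 2 * t) →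
        coord k = coord (k + 1) := by
      intro k h1 h2 h3
      have hin : corootD n k ∈ h' := by
        rw [hh']
        refine Submodule.subset_span ⟨k, h1, by omega, ?_, rfl⟩
        rintro (rfl | ⟨t, ht, he⟩)
        · omega
        · exact h3 t ht he
      have h0 := hvw _ hin
      rw [corootD, if_neg (by omega), inner_sub_right] at h0
      simp only [hcoorddef]
      linarith
    have e1 : ∀ k, 1 ≤ k → k ≤ 2 * q → coord k = coord (k + 1) := fun k h1 h2 =>
      hmemK k h1 (by omega) (fun t ht => by omega)
    have e2 : ∀ t, 1 ≤ t → t ≤ ℓ → coord (2 * q + 2 * t) = coord (2 * q + 2 * t + 1) :=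
      fun t h1 h2 => hmemK _ (by omega) (by omega) (fun t' ht' => by omega)
    have hAB := chase q ℓ A B coord
      (fun i hi => by simp only [hA]; rw [dif_neg (by omega)])
      (fun j hj => by simp only [hB]; rw [dif_neg (by omega)])
      (fun p => by simp only [hcoorddef]; exact hcoord p) e1 e2
    rintro (i | j)
    · have hi := i.2
      have hz := (hAB (i.1 + 1) (by omega)).1
      simp only [hA] at hz
      rw [dif_pos ⟨by omega, by omega⟩] at hz
      simpa using hz
    · have hj := j.2
      have hz := (hAB (j.1 + 1) (by omega)).2
      simp only [hB] at hz
      rw [dif_pos ⟨by omega, by omega⟩] at hz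
      simpa using hz
  have hli : LinearIndependent ℝ
      (fun x : ↥S => restrictedInner (x : EuclideanSpace ℝ (Fin n)) h') := by
    rw [← linearIndependent_equiv ((Equiv.ofInjective g hginj).trans (Equiv.setCongr hrange))]
    have hco : ((fun x : ↥S => restrictedInner (x : EuclideanSpace ℝ (Fin n)) h') ∘
        ((Equiv.ofInjective g hginj).trans (Equiv.setCongr hrange)))
        = fun i => restrictedInner (g i) h' := funext fun i => by
      simp only [Function.comp_apply, Equiv.trans_apply, Equiv.ofInjective_apply,
        Equiv.setCongr_apply]
    rw [hco]
    exact Fintype.linearIndependent_iff.mpr key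
  refine ⟨?_, ?_, hli, ?_⟩
  · rw [← hrange, ← Set.image_univ, Set.ncard_image_of_injective _ hginj, Set.ncard_univ]
    simp only [Nat.card_eq_fintype_card, Fintype.card_sum, Fintype.card_fin]
    omega
  · rw [hfr]; omega
  · have hco : (fun x : ↥S => restrictedInner (x : EuclideanSpace ℝ (Fin n)) h')
        = (fun y => restrictedInner y h') ∘ (fun x : ↥S => (x : EuclideanSpace ℝ (Fin n))) := rfl
    rw [hco, Set.range_comp, Subtype.range_coe, ← hrange, ← Set.range_comp]
    have hli2 : LinearIndependent ℝ ((fun y => restrictedInner y h') ∘ g) :=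
      Fintype.linearIndependent_iff.mpr key
    apply hli2.span_eq_top_of_card_eq_finrank'
    rw [Subspace.dual_finrank_eq, hfr]
    simp only [Fintype.card_sum, Fintype.card_fin]
    omega
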